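/- Let X₁ ~ N(μ₁, 1/2) and X₂ ~ N(μ₂, 1/2) be independent with μ₁ ≥ μ₂, and let Φ be the standard normal CDF. Define W = 1 if X₁ > X₂ and W = 2 otherwise, R the other index, and p_{WR} = 1 − Φ(X_W − X_R). Then P(reject H: μ_W < μ_R falsely) = P(p_{21} < α, X₂ > X₁)·1{μ₂ < μ₁} ≤ α; i.e., the uncorrected level-α one-sided test comparing winner to loser controls Type I error for the strict-inequality null μ_W < μ_R. -/

import Mathlib

open MeasureTheory ProbabilityTheory Set Real Filter
open scoped ENNReal NNReal Topology

lemma pdf_conv (m₁ m₂ z x : ℝ) :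
    gaussianPDFReal m₁ (1/2) x * gaussianPDFReal m₂ (1/2) (z - x)
      = gaussianPDFReal (m₁+m₂) 1 z * gaussianPDFReal ((m₁ + z - m₂)/2) (1/4) x := by
  simp only [gaussianPDFReal]
  have c1 : ((1/2 : NNReal) : ℝ) = 1/2 := by norm_num
  have c2 : ((1/4 : NNReal) : ℝ) = 1/4 := by norm_num
  have c3 : ((1 : NNReal) : ℝ) = 1 := by norm_num
  rw [c1, c2, c3]
  have hπ := Real.pi_pos
  rw [mul_mul_mul_comm, mul_mul_mul_comm ((√(2*π*1))⁻¹)]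
  congr 1
  · have e1 : 2*π*(1/2 : ℝ) = π := by ring
    have e2 : (2*π*(1/4 : ℝ)) = π/2 := by ring
    rw [e1, e2, ← mul_inv, ← mul_inv, ← Real.sqrt_mul (by positivity), ← Real.sqrt_mul (by positivity)]
    have : 2*π*1*(π/2) = π * π := by ring
    rw [this, Real.sqrt_mul_self hπ.le]
  · rw [← Real.exp_add, ← Real.exp_add]
    congr 1
    ring

lemma key_lintegral (m₁ m₂ z : ℝ) :
    ∫⁻ x, gaussianPDF m₁ (1/2) x * gaussianPDF m₂ (1/2) (z - x)
      = gaussianPDF (m₁+m₂) 1 z := by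
  simp only [gaussianPDF]
  simp_rw [← ENNReal.ofReal_mul (gaussianPDFReal_nonneg _ _ _), pdf_conv m₁ m₂ z,
    ENNReal.ofReal_mul (gaussianPDFReal_nonneg _ _ _)]
  rw [lintegral_const_mul _ (measurable_gaussianPDFReal _ _).ennreal_ofReal,
    lintegral_gaussianPDFReal_eq_one _ (by norm_num), mul_one]

lemma gaussian_conv (m₁ m₂ : ℝ) :
    ((gaussianReal m₁ (1/2)).prod (gaussianReal m₂ (1/2))).map (fun p : ℝ × ℝ => p.1 + p.2)
      = gaussianReal (m₁ + m₂) 1 := by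
  have h2 : (1/2 : NNReal) ≠ 0 := by norm_num
  ext s hs
  rw [Measure.map_apply (by fun_prop : Measurable (fun p : ℝ × ℝ => p.1 + p.2)) hs,
    Measure.prod_apply (hs.preimage (by fun_prop : Measurable (fun p : ℝ × ℝ => p.1 + p.2)))]
  have hpre : ∀ x : ℝ, (Prod.mk x ⁻¹' ((fun p : ℝ × ℝ => p.1 + p.2) ⁻¹' s))
      = (fun y => x + y) ⁻¹' s := fun x => rfl
  simp_rw [hpre]
  have inner_eq : ∀ x : ℝ, gaussianReal m₂ (1/2) ((fun y => x + y) ⁻¹' s)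
      = ∫⁻ z, gaussianPDF m₂ (1/2) (z - x) * s.indicator 1 z := by
    intro x
    rw [gaussianReal_of_var_ne_zero _ h2,
      withDensity_apply _ (hs.preimage (measurable_const_add x)),
      ← lintegral_indicator (hs.preimage (measurable_const_add x)) _]
    have : ∀ y : ℝ, ((fun y => x + y) ⁻¹' s).indicator (gaussianPDF m₂ (1/2)) y
        = (fun z => gaussianPDF m₂ (1/2) (z - x) * s.indicator 1 z) (x + y) := by
      intro y
      by_cases hy : x + y ∈ s <;>
        simp [Set.indicator, hy, Set.mem_preimage]
    simp_rw [this]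
    rw [lintegral_add_left_eq_self (fun z => gaussianPDF m₂ (1/2) (z - x) * s.indicator 1 z) x]
  simp_rw [inner_eq]
  have hF : Measurable (fun p : ℝ × ℝ => gaussianPDF m₂ (1/2) (p.2 - p.1) * s.indicator 1 p.2) :=
    ((measurable_gaussianPDF _ _).comp (measurable_snd.sub measurable_fst)).mul
      ((measurable_indicator_const_iff (1:ℝ≥0∞)).mpr hs |>.comp measurable_snd)
  rw [gaussianReal_of_var_ne_zero _ h2,
    lintegral_withDensity_eq_lintegral_mul _ (measurable_gaussianPDF _ _)
      hF.lintegral_prod_right']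
  simp only [Pi.mul_apply]
  have : ∀ x : ℝ, gaussianPDF m₁ (1/2) x * ∫⁻ z, gaussianPDF m₂ (1/2) (z - x) * s.indicator 1 z
      = ∫⁻ z, gaussianPDF m₁ (1/2) x * (gaussianPDF m₂ (1/2) (z - x) * s.indicator 1 z) := by
    intro x
    have hmx : Measurable fun z : ℝ => gaussianPDF m₂ (1/2) (z - x) * s.indicator 1 z :=
      ((measurable_gaussianPDF _ _).comp (measurable_sub_const x)).mul
        ((measurable_indicator_const_iff (1:ℝ≥0∞)).mpr hs)
    exact (lintegral_const_mul _ hmx).symm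
  simp_rw [this]
  rw [lintegral_lintegral_swap
    ((((measurable_gaussianPDF _ _).comp measurable_fst).mul hF).aemeasurable)]
  have : ∀ z : ℝ, ∫⁻ x, gaussianPDF m₁ (1/2) x * (gaussianPDF m₂ (1/2) (z - x) * s.indicator 1 z)
      = gaussianPDF (m₁+m₂) 1 z * s.indicator 1 z := by
    intro z
    simp_rw [← mul_assoc]
    have hm : Measurable fun x : ℝ => gaussianPDF m₁ (1/2) x * gaussianPDF m₂ (1/2) (z - x) :=
      (measurable_gaussianPDF _ _).mul ((measurable_gaussianPDF _ _).comp (measurable_const_sub z))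
    calc ∫⁻ x, gaussianPDF m₁ (1/2) x * gaussianPDF m₂ (1/2) (z - x) * s.indicator 1 z
        = (∫⁻ x, gaussianPDF m₁ (1/2) x * gaussianPDF m₂ (1/2) (z - x)) * s.indicator 1 z :=
          lintegral_mul_const _ hm
      _ = gaussianPDF (m₁+m₂) 1 z * s.indicator 1 z := by rw [key_lintegral]
  simp_rw [this]
  rw [gaussianReal_of_var_ne_zero _ (by norm_num : (1:NNReal) ≠ 0), withDensity_apply _ hs,
    ← lintegral_indicator hs _]
  congr 1
  ext z
  by_cases hz : z ∈ s <;> simp [Set.indicator, hz]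


/-- The standard normal CDF. -/
noncomputable def stdNormalCDF : ℝ → ℝ :=
  fun x => (ProbabilityTheory.cdf (ProbabilityTheory.gaussianReal 0 1)) x

/-- Rank verification with the strict-inequality null `μ_W < μ_R`:
the uncorrected level-α one-sided test comparing winner to loser controls Type I
error. A false rejection only occurs when `μ₂ < μ₁` and `X₂` wins. -/
theorem rank_verification_strict_null
    {Ω : Type*} [MeasurableSpace Ω] (μpr : Measure Ω) [IsProbabilityMeasure μpr]
    (μ₁ μ₂ : ℝ) (hμ : μ₂ ≤ μ₁)
    (X₁ X₂ : Ω → ℝ) (h1 : Measurable X₁) (h2 : Measurable X₂)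
    (hind : IndepFun X₁ X₂ μpr)
    (hd1 : μpr.map X₁ = gaussianReal μ₁ (1/2))
    (hd2 : μpr.map X₂ = gaussianReal μ₂ (1/2))
    (α : ℝ) (hα : α ∈ Set.Icc (0:ℝ) 1) :
    (if μ₂ < μ₁ then
        μpr {ω | X₁ ω < X₂ ω ∧ 1 - stdNormalCDF (X₂ ω - X₁ ω) < α}
      else 0)
      ≤ ENNReal.ofReal α := by
  obtain ⟨hα0, hα1⟩ := hα
  split_ifs with hlt
  swap
  · exact zero_le
  -- distribution of the difference
  have hD : μpr.map (fun ω => X₂ ω - X₁ ω) = gaussianReal (μ₂ - μ₁) 1 := by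
    have hnegmap : μpr.map (fun ω => -X₁ ω) = gaussianReal (-μ₁) (1/2) := by
      have h : μpr.map (fun ω => -X₁ ω) = (μpr.map X₁).map ((-1 : ℝ) * ·) := by
        rw [Measure.map_map (measurable_const_mul _) h1]
        congr 1; ext ω; simp
      rw [h, hd1, gaussianReal_map_const_mul]
      congr 1
      · ring
      · ext; push_cast; norm_num
    have hindn : IndepFun X₂ (fun ω => -X₁ ω) μpr :=
      hind.symm.comp measurable_id measurable_neg
    have hpair : μpr.map (fun ω => (X₂ ω, -X₁ ω))
        = (μpr.map X₂).prod (μpr.map (fun ω => -X₁ ω)) :=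
      (indepFun_iff_map_prod_eq_prod_map_map h2.aemeasurable h1.neg.aemeasurable).mp hindn
    have hcomp : (fun ω => X₂ ω - X₁ ω)
        = (fun p : ℝ × ℝ => p.1 + p.2) ∘ (fun ω => (X₂ ω, -X₁ ω)) := by
      ext ω; simp [sub_eq_add_neg]
    rw [hcomp, ← Measure.map_map (by fun_prop : Measurable (fun p : ℝ × ℝ => p.1 + p.2)) (by fun_prop : Measurable (fun ω => (X₂ ω, -X₁ ω))),
      hpair, hd2, hnegmap, gaussian_conv, ← sub_eq_add_neg]
  -- trivial case α = 1
  rcases eq_or_lt_of_le hα1 with h1eq | hα1'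
  · refine le_trans prob_le_one ?_
    rw [h1eq]; simp
  -- now α < 1
  by_cases hS : ({x : ℝ | 1 - stdNormalCDF x < α}).Nonempty
  swap
  · have hE : {ω | X₁ ω < X₂ ω ∧ 1 - stdNormalCDF (X₂ ω - X₁ ω) < α} = ∅ := by
      ext ω
      simp only [mem_setOf_eq, mem_empty_iff_false, iff_false, not_and]
      intro _ hc
      exact hS ⟨X₂ ω - X₁ ω, hc⟩
    rw [hE]
    simp
  obtain ⟨x₀, hx₀⟩ : ∃ x, stdNormalCDF x < 1 - α := by
    have ht := tendsto_cdf_atBot (μ := gaussianReal 0 1)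
    exact (ht.eventually_lt_const (by linarith)).exists
  have hbdd : BddBelow {x : ℝ | 1 - stdNormalCDF x < α} := by
    refine ⟨x₀, fun s hs => ?_⟩
    by_contra hcon
    push_neg at hcon
    have : stdNormalCDF s ≤ stdNormalCDF x₀ :=
      monotone_cdf (μ := gaussianReal 0 1) hcon.le
    simp only [mem_setOf_eq] at hs
    linarith
  set S : Set ℝ := {x : ℝ | 1 - stdNormalCDF x < α} with hSdef
  set t := sInf S with htdef
  have hIoi : Ioi t ⊆ S := by
    intro y hy
    obtain ⟨u, huS, hu⟩ := exists_lt_of_csInf_lt hS hy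
    have hmon : stdNormalCDF u ≤ stdNormalCDF y :=
      monotone_cdf (μ := gaussianReal 0 1) hu.le
    simp only [hSdef, mem_setOf_eq] at huS ⊢
    linarith
  have hΦt : 1 - α ≤ stdNormalCDF t := by
    have hrc : Tendsto stdNormalCDF (nhdsWithin t (Ioi t)) (𝓝 (stdNormalCDF t)) :=
      ((cdf (gaussianReal 0 1)).right_continuous t).tendsto.mono_left
        (nhdsWithin_mono t Ioi_subset_Ici_self)
    refine ge_of_tendsto hrc (eventually_nhdsWithin_of_forall fun y hy => ?_)
    have := hIoi hy
    simp only [hSdef, mem_setOf_eq] at this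
    linarith
  have hsub : {ω | X₁ ω < X₂ ω ∧ 1 - stdNormalCDF (X₂ ω - X₁ ω) < α}
      ⊆ (fun ω => X₂ ω - X₁ ω) ⁻¹' (Ici t) := fun ω hω => csInf_le hbdd hω.2
  have h0 : gaussianReal 0 1 ({t} : Set ℝ) = 0 := by
    rw [gaussianReal_of_var_ne_zero _ (by norm_num : (1:NNReal) ≠ 0),
      withDensity_apply _ (measurableSet_singleton t)]
    exact setLIntegral_measure_zero _ _ Real.volume_singleton
  calc μpr {ω | X₁ ω < X₂ ω ∧ 1 - stdNormalCDF (X₂ ω - X₁ ω) < α}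
      ≤ μpr ((fun ω => X₂ ω - X₁ ω) ⁻¹' Ici t) := measure_mono hsub
    _ = (μpr.map (fun ω => X₂ ω - X₁ ω)) (Ici t) :=
        (Measure.map_apply (h2.sub h1) measurableSet_Ici).symm
    _ = gaussianReal (μ₂ - μ₁) 1 (Ici t) := by rw [hD]
    _ ≤ gaussianReal 0 1 (Ioi t) := by
        have hmap : gaussianReal (μ₂ - μ₁) 1 = (gaussianReal 0 1).map (· + (μ₂ - μ₁)) := by
          rw [gaussianReal_map_add_const]; simp
        rw [hmap, Measure.map_apply (measurable_add_const _) measurableSet_Ici]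
        have hpre : (· + (μ₂ - μ₁)) ⁻¹' Ici t = Ici (t - (μ₂ - μ₁)) := by
          ext x; simp [mem_Ici, le_sub_iff_add_le]
        rw [hpre]
        calc gaussianReal 0 1 (Ici (t - (μ₂ - μ₁))) ≤ gaussianReal 0 1 (Ici t) :=
              measure_mono (Ici_subset_Ici.mpr (by linarith))
          _ ≤ gaussianReal 0 1 ({t} ∪ Ioi t) :=
              measure_mono (by rw [← Set.Ioi_insert, Set.insert_eq])
          _ ≤ gaussianReal 0 1 {t} + gaussianReal 0 1 (Ioi t) := measure_union_le _ _
          _ = gaussianReal 0 1 (Ioi t) := by rw [h0, zero_add]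
    _ = 1 - ENNReal.ofReal (stdNormalCDF t) := by
        rw [← compl_Iic, measure_compl measurableSet_Iic (measure_ne_top _ _), measure_univ]
        congr 1
        exact (ofReal_cdf (μ := gaussianReal 0 1) t).symm
    _ ≤ ENNReal.ofReal α := by
        rw [tsub_le_iff_right]
        calc (1:ℝ≥0∞) = ENNReal.ofReal 1 := by simp
          _ ≤ ENNReal.ofReal (α + stdNormalCDF t) :=
              ENNReal.ofReal_le_ofReal (by linarith)
          _ = ENNReal.ofReal α + ENNReal.ofReal (stdNormalCDF t) :=
              ENNReal.ofReal_add hα0 (cdf_nonneg (μ := gaussianReal 0 1) t)
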